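/- Let q be a prime power and f : F_q^k → S a function with E = |Im(f)| and ℓ = min_{α ∈ Im(f)} |f^{-1}(α)|. Suppose there exists an (f, t)-FCC of length n, i.e., a systematic encoding 𝔠 : F_q^k → F_q^n with d(𝔠(u_1), 𝔠(u_2)) ≥ 2t+1 whenever f(u_1) ≠ f(u_2). Then E · m ≤ q^n, where m is the minimum of |B(v_1, t) ∪ ⋯ ∪ B(v_ℓ, t)| over all choices of ℓ pairwise distinct vectors v_1, …, v_ℓ ∈ F_q^n. -/

import Mathlib

/-- **generalized Hamming bound for `(f, t)`-FCCs.** If an `(f, t)`-FCC of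
length `n` exists, `E = |Im(f)|`, `ℓ = min_{α ∈ Im(f)} |f⁻¹(α)|`, and `m` is the minimum size
of a union of `ℓ` Hamming balls of radius `t` around distinct centers in `F_q^n`, then
`E · m ≤ q^n`. -/
theorem hamming_bound_FCC
    {F S : Type*} [Field F] [Fintype F] [DecidableEq F]
    {k n : ℕ} (hkn : k ≤ n) (f : (Fin k → F) → S) (t : ℕ)
    (E l m : ℕ)
    (hE : E = Nat.card (Set.range f))
    (hl1 : ∀ u : Fin k → F, l ≤ Nat.card {v : Fin k → F | f v = f u})
    (hl2 : ∃ u : Fin k → F, Nat.card {v : Fin k → F | f v = f u} = l)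
    (hm : m = sInf {c : ℕ | ∃ v : Fin l → Fin n → F, Function.Injective v ∧
      Nat.card (⋃ j, {x : Fin n → F | hammingDist x (v j) ≤ t}) = c})
    (enc : (Fin k → F) → (Fin n → F))
    (hsys : ∀ (u : Fin k → F) (i : Fin k), enc u (Fin.castLE hkn i) = u i)
    (hfcc : ∀ u v : Fin k → F, f u ≠ f v → 2 * t + 1 ≤ hammingDist (enc u) (enc v)) :
    E * m ≤ Fintype.card F ^ n := by
  classical
  -- the encoding is injective thanks to systematicity
  have hencinj : Function.Injective enc := by
    intro u v h
    funext i
    rw [← hsys u i, h, hsys v i]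
  have hfinr : (Set.range f).Finite := Set.finite_range f
  set A : Finset S := hfinr.toFinset with hA
  -- choose, for each α in the range, l distinct preimages
  have hw0 : ∀ α : S, ∃ w : Fin l → Fin k → F,
      α ∈ Set.range f → (Function.Injective w ∧ ∀ j, f (w j) = α) := by
    intro α
    by_cases hα : α ∈ Set.range f
    · obtain ⟨u, rfl⟩ := hα
      have hcard : l ≤ Nat.card {v : Fin k → F | f v = f u} := hl1 u
      haveI : Fintype {v : Fin k → F | f v = f u} := Set.Finite.fintype (Set.toFinite _)
      rw [Nat.card_eq_fintype_card] at hcard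
      have : Nonempty (Fin l ↪ {v : Fin k → F | f v = f u}) := by
        apply Function.Embedding.nonempty_of_card_le
        simpa using hcard
      obtain ⟨e⟩ := this
      exact ⟨fun j => (e j).1, fun _ =>
        ⟨fun j j' h => e.injective (Subtype.ext h), fun j => (e j).2⟩⟩
    · exact ⟨fun _ => 0, fun h => absurd h hα⟩
  choose w hw using hw0
  -- the union of balls around the encodings of the chosen preimages, as a finset
  set g : S → Finset (Fin n → F) :=
    fun α => Finset.univ.filter (fun x => ∃ j : Fin l, hammingDist x (enc (w α j)) ≤ t)
    with hg
  -- each such union has at least m elements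
  have hmle : ∀ α ∈ A, m ≤ (g α).card := by
    intro α hα
    rw [hA, Set.Finite.mem_toFinset] at hα
    obtain ⟨hwinj, hwval⟩ := hw α hα
    have hvinj : Function.Injective (fun j => enc (w α j)) :=
      fun j j' h => hwinj (hencinj h)
    have hset : (⋃ j, {x : Fin n → F | hammingDist x (enc (w α j)) ≤ t}) = ↑(g α) := by
      ext x
      simp [hg]
    have hmem : (g α).card ∈ {c : ℕ | ∃ v : Fin l → Fin n → F, Function.Injective v ∧
        Nat.card (⋃ j, {x : Fin n → F | hammingDist x (v j) ≤ t}) = c} := by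
      refine ⟨fun j => enc (w α j), hvinj, ?_⟩
      rw [hset, Nat.card_coe_set_eq, Set.ncard_coe_finset]
    rw [hm]
    exact Nat.sInf_le hmem
  -- the unions are pairwise disjoint
  have hdisj : ∀ α ∈ A, ∀ β ∈ A, α ≠ β → Disjoint (g α) (g β) := by
    intro α hα β hβ hne
    rw [hA, Set.Finite.mem_toFinset] at hα hβ
    rw [Finset.disjoint_left]
    intro x hxα hxβ
    rw [hg, Finset.mem_filter] at hxα hxβ
    obtain ⟨-, j, hj⟩ := hxα
    obtain ⟨-, j', hj'⟩ := hxβ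
    have hfne : f (w α j) ≠ f (w β j') := by
      rw [(hw α hα).2 j, (hw β hβ).2 j']; exact hne
    have h1 := hfcc _ _ hfne
    have h2 : hammingDist (enc (w α j)) (enc (w β j')) ≤
        hammingDist (enc (w α j)) x + hammingDist x (enc (w β j')) :=
      hammingDist_triangle _ _ _
    rw [hammingDist_comm (enc (w α j)) x] at h2
    clear * - h1 h2 hj hj'
    omega
  -- counting
  have hEcard : E = A.card := by
    rw [hE, hA, Nat.card_coe_set_eq, Set.ncard_eq_toFinset_card']
    simp
  have hsum : A.card * m ≤ ∑ α ∈ A, (g α).card := by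
    calc A.card * m = A.card • m := (smul_eq_mul _ _).symm
    _ ≤ ∑ α ∈ A, (g α).card := Finset.card_nsmul_le_sum A _ m hmle
  have hbu : ∑ α ∈ A, (g α).card = (A.biUnion g).card :=
    (Finset.card_biUnion hdisj).symm
  have hle : (A.biUnion g).card ≤ Fintype.card (Fin n → F) :=
    Finset.card_le_univ _
  rw [Fintype.card_fun, Fintype.card_fin] at hle
  rw [hEcard]
  clear * - hsum hbu hle
  omega
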